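/- arXiv:2503.07729 — 3 statements merged into one kernel-verified Lean document; each statement's English description precedes it below -/
import Mathlib

section
/- Assume Π_A satisfies cloned energy-band thermalization in the shell S (of cardinality d ≥ 1) with bandwidth ΔE > 0 and accuracy ε > 0, let ρ be a state supported on the shell, let w be a weight function with |w̃(δE)| ≤ w₀ for every |δE| ≥ ΔE (w₀ ≥ 0), and let κ ∈ (0,1). Then there exists a measurable set X ⊆ ℝ with ∫_X w(t) dt < κ such that for every t ∉ X, (Tr(ρ(t) Π_A) − ⟨Π_A⟩_S)² < (ε + w₀ · ⟨Π_A⟩_S) · d · Tr(ρ²) / κ. -/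
open MeasureTheory Filter
open scoped ComplexOrder

namespace QET

variable {D : ℕ}

/-- `exp(-itH)` for the Hamiltonian `H = Σ_n (E n) • P_n`, where `P_n` is the orthogonal
projection onto the `n`-th vector of the fixed orthonormal eigenbasis `e`.  All operators are
written as matrices in this eigenbasis, so `H` is diagonal and
`exp(-itH) = diag (exp (-i t E n))`. -/
noncomputable def U (E : Fin D → ℝ) (t : ℝ) : Matrix (Fin D) (Fin D) ℂ :=
  Matrix.diagonal fun n => Complex.exp (-(Complex.I) * t * (E n))

/-- Time evolution `X(t) = exp(-itH) · X · exp(itH)`. -/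
noncomputable def evolve (E : Fin D → ℝ) (t : ℝ) (X : Matrix (Fin D) (Fin D) ℂ) :
    Matrix (Fin D) (Fin D) ℂ :=
  U E t * X * U E (-t)

/-- A state: a positive semidefinite operator with unit trace. -/
def IsState (ρ : Matrix (Fin D) (Fin D) ℂ) : Prop :=
  ρ.PosSemidef ∧ ρ.trace = 1

/-- An observable: an orthogonal projection (Hermitian idempotent). -/
def IsObservable (P : Matrix (Fin D) (Fin D) ℂ) : Prop :=
  P.IsHermitian ∧ P * P = P

/-- Orthogonal projection `Π_S` onto the energy shell spanned by `{e n : n ∈ S}`. -/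
noncomputable def shellProj (S : Finset (Fin D)) : Matrix (Fin D) (Fin D) ℂ :=
  Matrix.diagonal fun n => if n ∈ S then 1 else 0

/-- A state is supported on the shell of `S`: `Π_S ρ Π_S = ρ`. -/
def SupportedOn (S : Finset (Fin D)) (ρ : Matrix (Fin D) (Fin D) ℂ) : Prop :=
  shellProj S * ρ * shellProj S = ρ

/-- Thermal value `⟨P⟩_S = Tr(P Π_S)/d` (a real number: trace of Hermitian products below). -/
noncomputable def thermVal (S : Finset (Fin D)) (P : Matrix (Fin D) (Fin D) ℂ) : ℝ :=
  (P * shellProj S).trace.re / S.card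

/-- Fourier transform `w̃(E) = ∫ w(t) exp(-iEt) dt` of a weight function. -/
noncomputable def fourier (w : ℝ → ℝ) (En : ℝ) : ℂ :=
  ∫ t : ℝ, (w t : ℂ) * Complex.exp (-(Complex.I) * En * t)

/-- A weight function: integrable, nonnegative, normalized to `∫ w = 1`. -/
structure IsWeight (w : ℝ → ℝ) : Prop where
  integrable : Integrable w
  nonneg : ∀ t, 0 ≤ w t
  normalized : (∫ t : ℝ, w t) = 1

/-- A completely positive weight: a weight function whose Fourier transform is a
nonnegative real number everywhere. -/
structure IsCPWeight (w : ℝ → ℝ) extends IsWeight w : Prop where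
  fourier_im : ∀ En : ℝ, (fourier w En).im = 0
  fourier_nonneg : ∀ En : ℝ, 0 ≤ (fourier w En).re

/-- The matrix element `⟨e n, (P - ⟨P⟩_S · 1) e m⟩ = ⟨e n, P e m⟩ - ⟨P⟩_S δ_{nm}`. -/
noncomputable def devEl (S : Finset (Fin D)) (P : Matrix (Fin D) (Fin D) ℂ)
    (n m : Fin D) : ℂ :=
  P n m - if n = m then (thermVal S P : ℂ) else 0

/-- Band variance `Σ_{n,m ∈ S, |E n - E m| < ΔE} |⟨e n, P e m⟩ - ⟨P⟩_S δ_{nm}|²`. -/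
noncomputable def bandVar (S : Finset (Fin D)) (E : Fin D → ℝ) (ΔE : ℝ)
    (P : Matrix (Fin D) (Fin D) ℂ) : ℝ :=
  ∑ n ∈ S, ∑ m ∈ S,
    if |E n - E m| < ΔE then ‖devEl S P n m‖ ^ 2 else 0

/-- Energy-band thermalization in the shell `S` with bandwidth `ΔE` and accuracy `ε`. -/
def EnergyBandTherm (S : Finset (Fin D)) (E : Fin D → ℝ) (ΔE ε : ℝ)
    (P : Matrix (Fin D) (Fin D) ℂ) : Prop :=
  (1 / (S.card : ℝ)) * bandVar S E ΔE P < ε ^ 2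

/-- Expectation value `⟨v, P v⟩` of an operator in a vector. -/
noncomputable def expVal (P : Matrix (Fin D) (Fin D) ℂ) (v : Fin D → ℂ) : ℂ :=
  dotProduct (star v) (P.mulVec v)

/-- Cloned energy-band thermalization in the shell `S` with bandwidth `ΔE` and accuracy `ε`:
`(1/d²) Σ_{n,m,k,l ∈ S, |E n + E l - E m - E k| < ΔE} |δΠ_{nm}|² |δΠ_{lk}|² < ε²`,
where `δΠ_{nm} = ⟨e n, Π_A e m⟩ - ⟨Π_A⟩_S δ_{nm}`. -/
def ClonedEnergyBandTherm (S : Finset (Fin D)) (E : Fin D → ℝ) (ΔE ε : ℝ)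
    (P : Matrix (Fin D) (Fin D) ℂ) : Prop :=
  (1 / (S.card : ℝ) ^ 2) *
    (∑ n ∈ S, ∑ m ∈ S, ∑ k ∈ S, ∑ l ∈ S,
      if |E n + E l - E m - E k| < ΔE then
        ‖devEl S P n m‖ ^ 2 * ‖devEl S P l k‖ ^ 2
      else 0) < ε ^ 2

/-! ### Auxiliary material -/

/-- one term of the deviation observable in the Heisenberg picture -/
noncomputable def gterm (E : Fin D → ℝ) (S : Finset (Fin D)) (ρ P : Matrix (Fin D) (Fin D) ℂ)
    (p : Fin D × Fin D) (t : ℝ) : ℂ :=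
  Complex.exp (-(Complex.I) * ((E p.1 : ℂ) - (E p.2 : ℂ)) * t) * (ρ p.1 p.2 * devEl S P p.2 p.1)

noncomputable def gf (E : Fin D → ℝ) (S : Finset (Fin D)) (ρ P : Matrix (Fin D) (Fin D) ℂ)
    (t : ℝ) : ℂ :=
  ∑ p ∈ S ×ˢ S, gterm E S ρ P p t

lemma mul_conj_exp (a b c d t : ℝ) (X Y : ℂ) :
    (Complex.exp (-(Complex.I) * ((a:ℂ) - b) * t) * X) *
      (starRingEnd ℂ) (Complex.exp (-(Complex.I) * ((c:ℂ) - d) * t) * Y) =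
    (X * (starRingEnd ℂ) Y) * Complex.exp (-(Complex.I) * ((a:ℂ) + d - b - c) * t) := by
  rw [map_mul, ← Complex.exp_conj, ← mul_assoc]
  rw [mul_assoc _ X, mul_comm X, ← mul_assoc, ← Complex.exp_add]
  have : (starRingEnd ℂ) (-(Complex.I) * ((c:ℂ) - d) * t) = Complex.I * ((c:ℂ) - d) * t := by
    simp [map_mul, map_sub, Complex.conj_ofReal]
  rw [this]
  ring_nf

lemma integrable_w_exp (w : ℝ → ℝ) (hw : Integrable w) (a : ℝ) :
    Integrable (fun t : ℝ => (w t : ℂ) * Complex.exp (-(Complex.I) * a * t)) := by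
  have h : Integrable (fun t : ℝ => Complex.exp (-(Complex.I) * a * t) * (w t : ℂ)) := by
    refine Integrable.bdd_mul (c := 1) hw.ofReal ?_ (Filter.Eventually.of_forall fun t => ?_)
    · exact (Continuous.aestronglyMeasurable (by continuity))
    · rw [Complex.norm_exp]
      simp [mul_comm, mul_assoc]
  simpa [mul_comm] using h

lemma abs_fourier_le_one (w : ℝ → ℝ) (hw : IsWeight w) (a : ℝ) :
    ‖fourier w a‖ ≤ 1 := by
  rw [fourier]
  refine le_trans (norm_integral_le_integral_norm _) ?_
  have heq : ∀ t : ℝ, ‖(w t : ℂ) * Complex.exp (-(Complex.I) * a * t)‖ = w t := by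
    intro t
    rw [norm_mul, Complex.norm_exp]
    simp [Complex.norm_real, abs_of_nonneg (hw.nonneg t)]
  rw [MeasureTheory.integral_congr_ae (Filter.EventuallyEq.of_eq (funext heq)), hw.normalized]

lemma supp_apply {S : Finset (Fin D)} {ρ : Matrix (Fin D) (Fin D) ℂ}
    (h : SupportedOn S ρ) {n m : Fin D} (hnm : n ∉ S ∨ m ∉ S) : ρ n m = 0 := by
  have h2 : (shellProj S * ρ * shellProj S) n m = ρ n m := by rw [h]
  rw [shellProj, Matrix.mul_diagonal, Matrix.diagonal_mul] at h2
  rcases hnm with h1 | h1 <;> simpa [h1, eq_comm] using h2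

lemma devEl_conj {S : Finset (Fin D)} {P : Matrix (Fin D) (Fin D) ℂ} (hP : P.IsHermitian)
    (n m : Fin D) : devEl S P m n = (starRingEnd ℂ) (devEl S P n m) := by
  rw [devEl, devEl, map_sub]
  congr 1
  · simpa using (hP.apply m n).symm
  · by_cases h : n = m
    · subst h; simp [Complex.conj_ofReal]
    · rw [if_neg h, if_neg (fun hh : m = n => h hh.symm)]; simp

lemma devEl_abs_symm {S : Finset (Fin D)} {P : Matrix (Fin D) (Fin D) ℂ} (hP : P.IsHermitian)
    (n m : Fin D) : ‖devEl S P m n‖ = ‖devEl S P n m‖ := by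
  rw [devEl_conj hP, Complex.norm_conj]
lemma trace_identity (E : Fin D → ℝ) (S : Finset (Fin D)) (ρ P : Matrix (Fin D) (Fin D) ℂ)
    (hsupp : SupportedOn S ρ) (htr : ρ.trace = 1) (t : ℝ) :
    (evolve E t ρ * P).trace - (thermVal S P : ℂ) = gf E S ρ P t := by
  classical
  have hz : ∀ n m : Fin D, n ∉ S ∨ m ∉ S → ρ n m = 0 := fun n m hnm => supp_apply hsupp hnm
  have hev : ∀ n m, evolve E t ρ n m =
      Complex.exp (-(Complex.I) * ((E n : ℂ) - E m) * t) * ρ n m := by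
    intro n m
    show (U E t * ρ * U E (-t)) n m = _
    rw [U, U, Matrix.mul_diagonal, Matrix.diagonal_mul, mul_right_comm, ← Complex.exp_add]
    congr 2
    push_cast
    ring
  have htr2 : (evolve E t ρ * P).trace = ∑ n, ∑ m, evolve E t ρ n m * P m n := by
    simp [Matrix.trace, Matrix.diag, Matrix.mul_apply]
  have hres : (evolve E t ρ * P).trace = ∑ n ∈ S, ∑ m ∈ S, evolve E t ρ n m * P m n := by
    rw [htr2]
    rw [← Finset.sum_subset (Finset.subset_univ S) (fun n _ hn => Finset.sum_eq_zero
      (fun m _ => by rw [hev, hz n m (Or.inl hn)]; ring))]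
    refine Finset.sum_congr rfl fun n hn => ?_
    rw [← Finset.sum_subset (Finset.subset_univ S) (fun m _ hm => by
      rw [hev, hz n m (Or.inr hm)]; ring)]
  have hdiag1 : ∑ n ∈ S, ρ n n = 1 := by
    have h3 : ρ.trace = ∑ n, ρ n n := by simp [Matrix.trace, Matrix.diag]
    rw [h3] at htr
    rw [← htr]
    exact Finset.sum_subset (Finset.subset_univ S) (fun n _ hn => hz n n (Or.inl hn))
  have key : ∀ n ∈ S, ∑ m ∈ S, gterm E S ρ P (n, m) t
      = (∑ m ∈ S, evolve E t ρ n m * P m n) - (thermVal S P : ℂ) * ρ n n := by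
    intro n hn
    have hsplit : ∀ m, gterm E S ρ P (n, m) t =
        evolve E t ρ n m * P m n -
          (if m = n then (thermVal S P : ℂ) * ρ n n else 0) := by
      intro m
      rw [gterm, devEl, hev]
      by_cases h : m = n
      · subst h
        simp only [if_pos rfl, sub_self, mul_zero, zero_mul, Complex.exp_zero, if_true]
        ring
      · simp only [if_neg h]
        ring
    rw [Finset.sum_congr rfl fun m _ => hsplit m, Finset.sum_sub_distrib,
      Finset.sum_ite_eq' S n (fun _ => (thermVal S P : ℂ) * ρ n n), if_pos hn]
  rw [hres, gf, Finset.sum_product, Finset.sum_congr rfl key, Finset.sum_sub_distrib,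
    ← Finset.mul_sum, hdiag1, mul_one]

set_option maxHeartbeats 1000000 in
/-- **Cloned energy-band thermalization implies thermal equilibrium at almost all times.**
If `Π_A` satisfies cloned energy-band thermalization in the shell `S` (of cardinality
`d ≥ 1`) with bandwidth `ΔE > 0` and accuracy `ε > 0`, `ρ` is a state supported on the
shell, `w` is a weight function with `|w̃(δE)| ≤ w₀` for `|δE| ≥ ΔE`, and `κ ∈ (0,1)`, then
there is a measurable exceptional set `X ⊆ ℝ` with `∫_X w < κ` outside of which
`(Tr(ρ(t) Π_A) - ⟨Π_A⟩_S)² < (ε + w₀ ⟨Π_A⟩_S) · d · Tr ρ² / κ`. -/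
theorem cloned_energy_band_implies_equilibrium_at_almost_all_times
    {D : ℕ} (hD : 0 < D) (E : Fin D → ℝ)
    (S : Finset (Fin D)) (hd : 1 ≤ S.card)
    (PiA : Matrix (Fin D) (Fin D) ℂ) (hPiA : IsObservable PiA)
    (ΔE ε : ℝ) (hΔE : 0 < ΔE) (hε : 0 < ε)
    (hCEBT : ClonedEnergyBandTherm S E ΔE ε PiA)
    (ρ : Matrix (Fin D) (Fin D) ℂ) (hρ : IsState ρ) (hsupp : SupportedOn S ρ)
    (w : ℝ → ℝ) (hw : IsWeight w) (w₀ : ℝ) (hw₀ : 0 ≤ w₀)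
    (hband : ∀ δE : ℝ, ΔE ≤ |δE| → ‖fourier w δE‖ ≤ w₀)
    (κ : ℝ) (hκ0 : 0 < κ) (hκ1 : κ < 1) :
    ∃ X : Set ℝ, MeasurableSet X ∧ (∫ t in X, w t) < κ ∧
      ∀ t ∉ X,
        ((evolve E t ρ * PiA).trace.re - thermVal S PiA) ^ 2
          < (ε + w₀ * thermVal S PiA) * (S.card * (ρ * ρ).trace.re) / κ := by
  classical
  obtain ⟨hPH, hPP⟩ := hPiA
  obtain ⟨hρpos, hρtr⟩ := hρ
  have hρH : ρ.IsHermitian := hρpos.1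
  set d : ℝ := (S.card : ℝ) with hd_def
  have hd1 : (1:ℝ) ≤ d := by rw [hd_def]; exact_mod_cast hd
  have hd0 : (0:ℝ) < d := lt_of_lt_of_le one_pos hd1
  set c : ℝ := thermVal S PiA with hc_def
  set R : ℝ := (ρ * ρ).trace.re with hR_def
  -- diagonal entries of the projection
  have hdiagP : ∀ n, (PiA n n).re = ∑ m, Complex.normSq (PiA n m) := by
    intro n
    have h2 : PiA n n = ∑ m, ((Complex.normSq (PiA n m) : ℝ) : ℂ) := by
      conv_lhs => rw [← hPP, Matrix.mul_apply]
      refine Finset.sum_congr rfl fun m _ => ?_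
      rw [show PiA m n = (starRingEnd ℂ) (PiA n m) by simpa using (hPH.apply m n).symm,
        Complex.mul_conj]
    rw [h2, ← Complex.ofReal_sum, Complex.ofReal_re]
  have htrP : (PiA * shellProj S).trace = ∑ n ∈ S, PiA n n := by
    rw [Matrix.trace]
    simp only [Matrix.diag, shellProj, Matrix.mul_diagonal, mul_ite, mul_one, mul_zero]
    rw [Finset.sum_ite_mem, Finset.univ_inter]
  have hc_eq : c = (∑ n ∈ S, (PiA n n).re) / d := by
    rw [hc_def, thermVal, htrP, Complex.re_sum, hd_def]
  have hc0 : 0 ≤ c := by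
    rw [hc_eq]
    refine div_nonneg (Finset.sum_nonneg fun n _ => ?_) (le_of_lt hd0)
    rw [hdiagP n]
    exact Finset.sum_nonneg fun m _ => Complex.normSq_nonneg _
  have hSre : ∑ n ∈ S, (PiA n n).re = d * c := by
    rw [hc_eq, mul_div_cancel₀ _ (ne_of_gt hd0)]
  -- variance bound
  have hV : ∑ n ∈ S, ∑ m ∈ S, Complex.normSq (devEl S PiA n m) ≤ d * c := by
    have step : ∀ n ∈ S, ∑ m ∈ S, Complex.normSq (devEl S PiA n m)
        ≤ (PiA n n).re - 2*c*(PiA n n).re + c^2 := by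
      intro n hn
      have hterm : ∀ m ∈ S, Complex.normSq (devEl S PiA n m)
          = Complex.normSq (PiA n m) + (if m = n then -(2*c*(PiA n n).re) + c^2 else 0) := by
        intro m _
        by_cases h : m = n
        · subst h
          rw [if_pos rfl, devEl, if_pos rfl]
          simp only [Complex.normSq_apply, Complex.sub_re, Complex.sub_im, Complex.ofReal_re,
            Complex.ofReal_im]
          ring
        · rw [devEl, if_neg (fun hh : n = m => h hh.symm), if_neg h]
          simp
      have hsum : ∑ m ∈ S, Complex.normSq (devEl S PiA n m)
          = (∑ m ∈ S, Complex.normSq (PiA n m)) + (-(2*c*(PiA n n).re) + c^2) := by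
        rw [Finset.sum_congr rfl hterm, Finset.sum_add_distrib,
          Finset.sum_ite_eq' S n (fun _ => -(2*c*(PiA n n).re) + c^2), if_pos hn]
      rw [hsum]
      have hle : ∑ m ∈ S, Complex.normSq (PiA n m) ≤ (PiA n n).re := by
        rw [hdiagP n]
        exact Finset.sum_le_sum_of_subset_of_nonneg (Finset.subset_univ S)
          (fun m _ _ => Complex.normSq_nonneg _)
      linarith
    calc ∑ n ∈ S, ∑ m ∈ S, Complex.normSq (devEl S PiA n m)
        ≤ ∑ n ∈ S, ((PiA n n).re - 2*c*(PiA n n).re + c^2) := Finset.sum_le_sum step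
      _ = (∑ n ∈ S, (PiA n n).re) - 2*c*(∑ n ∈ S, (PiA n n).re) + d * c^2 := by
          rw [Finset.sum_add_distrib, Finset.sum_sub_distrib, ← Finset.mul_sum,
            Finset.sum_const, nsmul_eq_mul, ← hd_def]
      _ = d*c - 2*c*(d*c) + d*c^2 := by rw [hSre]
      _ ≤ d * c := by nlinarith [sq_nonneg c, hd0, hc0]
  -- purity
  have hR_eq : R = ∑ n, ∑ m, Complex.normSq (ρ n m) := by
    have h2 : (ρ * ρ).trace = ∑ n, ∑ m, ((Complex.normSq (ρ n m) : ℝ) : ℂ) := by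
      rw [Matrix.trace]
      refine Finset.sum_congr rfl fun n _ => ?_
      rw [Matrix.diag, Matrix.mul_apply]
      refine Finset.sum_congr rfl fun m _ => ?_
      rw [show ρ m n = (starRingEnd ℂ) (ρ n m) by simpa using (hρH.apply m n).symm,
        Complex.mul_conj]
    rw [hR_def, h2]
    simp_rw [← Complex.ofReal_sum]
    rw [Complex.ofReal_re]
  have hR0 : 0 < R := by
    have hRnn : 0 ≤ R := by
      rw [hR_eq]
      exact Finset.sum_nonneg fun n _ => Finset.sum_nonneg fun m _ => Complex.normSq_nonneg _
    rcases eq_or_lt_of_le hRnn with h | h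
    · exfalso
      have h0 := h.symm
      rw [hR_eq] at h0
      have h1 := (Finset.sum_eq_zero_iff_of_nonneg
        (fun n _ => Finset.sum_nonneg fun m _ => Complex.normSq_nonneg (ρ n m))).mp h0
      have hzz : ∀ n : Fin D, ρ n n = 0 := by
        intro n
        have h2 := (Finset.sum_eq_zero_iff_of_nonneg
          (fun m _ => Complex.normSq_nonneg (ρ n m))).mp (h1 n (Finset.mem_univ n)) n
          (Finset.mem_univ n)
        exact Complex.normSq_eq_zero.mp h2
      have h3 : ρ.trace = 0 := by
        rw [Matrix.trace]
        exact Finset.sum_eq_zero fun n _ => hzz n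
      exact one_ne_zero (hρtr.symm.trans h3)
    · exact h
  set B : ℝ := (ε + w₀ * c) * (d * R) with hB_def
  have hB0 : 0 < B := by
    have h1 : 0 < ε + w₀ * c := by nlinarith [mul_nonneg hw₀ hc0]
    have h2 : 0 < d * R := mul_pos hd0 hR0
    exact mul_pos h1 h2
  set g : ℝ → ℂ := gf E S ρ PiA with hg_def
  set f : ℝ → ℝ := fun t => Complex.normSq (g t) with hf_def
  have hgcont : Continuous g := by
    rw [hg_def]
    show Continuous fun t => ∑ p ∈ S ×ˢ S, gterm E S ρ PiA p t
    apply continuous_finset_sum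
    intro p _
    exact (Complex.continuous_exp.comp (continuous_const.mul Complex.continuous_ofReal)).mul
      continuous_const
  have hfm : Measurable f := by
    rw [hf_def]
    exact (Complex.continuous_normSq.comp hgcont).measurable
  have hgA : ∀ t, ((evolve E t ρ * PiA).trace.re - c)^2 ≤ f t := by
    intro t
    have h1 := trace_identity E S ρ PiA hsupp hρtr t
    have h2 : (evolve E t ρ * PiA).trace.re - c = (g t).re := by
      rw [hg_def, ← h1, hc_def]
      simp [Complex.sub_re, Complex.ofReal_re]
    rw [h2]
    have h3 : f t = Complex.normSq (g t) := rfl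
    rw [h3, Complex.normSq_apply]
    nlinarith [mul_self_nonneg (g t).im]
  -- quadruple sum machinery
  set Q : Finset ((Fin D × Fin D) × (Fin D × Fin D)) := (S ×ˢ S) ×ˢ (S ×ˢ S) with hQ_def
  set coef : (Fin D × Fin D) × (Fin D × Fin D) → ℂ := fun q =>
    (ρ q.1.1 q.1.2 * devEl S PiA q.1.2 q.1.1) *
      (starRingEnd ℂ) (ρ q.2.1 q.2.2 * devEl S PiA q.2.2 q.2.1) with hcoef_def
  set Δf : (Fin D × Fin D) × (Fin D × Fin D) → ℝ := fun q =>
    E q.1.1 + E q.2.2 - E q.1.2 - E q.2.1 with hΔf_def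
  have expand : ∀ t : ℝ, ((w t * f t : ℝ) : ℂ) =
      ∑ q ∈ Q, coef q * ((w t : ℂ) * Complex.exp (-(Complex.I) * ((Δf q : ℝ) : ℂ) * t)) := by
    intro t
    have h3 : f t = Complex.normSq (g t) := rfl
    have h0 : ((w t * f t : ℝ) : ℂ) = (w t : ℂ) * (g t * (starRingEnd ℂ) (g t)) := by
      rw [h3, Complex.ofReal_mul, Complex.mul_conj]
    rw [h0, hg_def]
    show (w t : ℂ) * (gf E S ρ PiA t * (starRingEnd ℂ) (gf E S ρ PiA t)) = _
    rw [gf, map_sum, Finset.sum_mul_sum]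
    simp only [Finset.mul_sum]
    conv_rhs => rw [hQ_def, Finset.sum_product]
    refine Finset.sum_congr rfl fun p hp => ?_
    refine Finset.sum_congr rfl fun p' hp' => ?_
    simp only [hcoef_def, hΔf_def]
    rw [gterm, gterm, mul_conj_exp]
    push_cast
    ring
  have hterm_int : ∀ q ∈ Q, Integrable
      (fun t : ℝ => coef q * ((w t : ℂ) * Complex.exp (-(Complex.I) * ((Δf q : ℝ) : ℂ) * t))) := by
    intro q _
    exact (integrable_w_exp w hw.integrable (Δf q)).const_mul (coef q)
  have hZint : Integrable (fun t : ℝ =>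
      ∑ q ∈ Q, coef q * ((w t : ℂ) * Complex.exp (-(Complex.I) * ((Δf q : ℝ) : ℂ) * t))) :=
    integrable_finset_sum Q hterm_int
  have hint : Integrable (fun t => w t * f t) := by
    refine hZint.re.congr (Filter.EventuallyEq.of_eq (funext fun t => ?_))
    rw [← expand t]
    simp
  have hIre : (∫ t, w t * f t) = (∑ q ∈ Q, coef q * fourier w (Δf q)).re := by
    have h1 : (fun t => w t * f t) = fun t => RCLike.re
        (∑ q ∈ Q, coef q * ((w t : ℂ) * Complex.exp (-(Complex.I) * ((Δf q : ℝ) : ℂ) * t))) := by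
      funext t
      rw [← expand t, RCLike.re_to_complex, Complex.ofReal_re]
    rw [h1, integral_re hZint, integral_finset_sum Q hterm_int,
      Finset.sum_congr rfl fun q _ => integral_const_mul (coef q) _, RCLike.re_to_complex]
    rfl
  have hIbound : (∫ t, w t * f t) < B := by
    set aρ : Fin D × Fin D → ℝ := fun p => ‖ρ p.1 p.2‖ with haρ_def
    set aδ : Fin D × Fin D → ℝ := fun p => ‖devEl S PiA p.2 p.1‖ with haδ_def
    have haρnn : ∀ p, 0 ≤ aρ p := fun p => norm_nonneg _
    have haδnn : ∀ p, 0 ≤ aδ p := fun p => norm_nonneg _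
    have habscoef : ∀ q, ‖coef q‖ = (aρ q.1 * aδ q.1) * (aρ q.2 * aδ q.2) := by
      intro q
      simp only [hcoef_def, haρ_def, haδ_def, norm_mul, Complex.norm_conj]
    have hρ2 : ∑ p ∈ S ×ˢ S, aρ p ^ 2 ≤ R := by
      have h1 : ∑ p ∈ S ×ˢ S, aρ p ^ 2 ≤ ∑ p : Fin D × Fin D, aρ p ^ 2 :=
        Finset.sum_le_sum_of_subset_of_nonneg (Finset.subset_univ _)
          (fun p _ _ => sq_nonneg _)
      refine le_trans h1 (le_of_eq ?_)
      rw [hR_eq, ← Finset.univ_product_univ, Finset.sum_product]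
      exact Finset.sum_congr rfl fun n _ => Finset.sum_congr rfl fun m _ => by
        rw [haρ_def, Complex.sq_norm]
    have hδ2 : ∑ p ∈ S ×ˢ S, aδ p ^ 2 ≤ d * c := by
      rw [Finset.sum_product]
      calc ∑ n ∈ S, ∑ m ∈ S, aδ (n, m) ^ 2
          = ∑ m ∈ S, ∑ n ∈ S, aδ (n, m) ^ 2 := Finset.sum_comm
        _ = ∑ n ∈ S, ∑ m ∈ S, Complex.normSq (devEl S PiA n m) := by
            refine Finset.sum_congr rfl fun m _ => Finset.sum_congr rfl fun n _ => ?_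
            rw [haδ_def, Complex.sq_norm]
        _ ≤ d * c := hV
    have h2 : (∫ t, w t * f t) = (∑ q ∈ Q, coef q * fourier w (Δf q)).re := hIre
    have h3 : (∫ t, w t * f t) ≤
        ∑ q ∈ Q, ‖coef q‖ * ‖fourier w (Δf q)‖ := by
      rw [h2]
      refine le_trans (Complex.re_le_norm _) (le_trans (norm_sum_le _ _) ?_)
      exact le_of_eq (Finset.sum_congr rfl fun q _ => norm_mul _ _)
    have hterm : ∀ q ∈ Q, ‖coef q‖ * ‖fourier w (Δf q)‖
        ≤ (if |Δf q| < ΔE then (aρ q.1 * aδ q.1) * (aρ q.2 * aδ q.2) else 0)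
          + w₀ * ((aρ q.1 * aδ q.1) * (aρ q.2 * aδ q.2)) := by
      intro q _
      rw [habscoef]
      have hA0 : 0 ≤ (aρ q.1 * aδ q.1) * (aρ q.2 * aδ q.2) :=
        mul_nonneg (mul_nonneg (haρnn _) (haδnn _)) (mul_nonneg (haρnn _) (haδnn _))
      by_cases hq : |Δf q| < ΔE
      · rw [if_pos hq]
        have h4 := abs_fourier_le_one w hw (Δf q)
        nlinarith [mul_nonneg hw₀ hA0, norm_nonneg (fourier w (Δf q))]
      · rw [if_neg hq]
        have h4 := hband (Δf q) (le_of_not_gt hq)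
        have h5 : 0 ≤ ‖fourier w (Δf q)‖ := norm_nonneg _
        nlinarith
    have h6 : (∫ t, w t * f t) ≤
        (∑ q ∈ Q, if |Δf q| < ΔE then (aρ q.1 * aδ q.1) * (aρ q.2 * aδ q.2) else 0)
        + w₀ * (∑ q ∈ Q, (aρ q.1 * aδ q.1) * (aρ q.2 * aδ q.2)) := by
      rw [Finset.mul_sum, ← Finset.sum_add_distrib]
      exact le_trans h3 (Finset.sum_le_sum hterm)
    have hAll : (∑ q ∈ Q, (aρ q.1 * aδ q.1) * (aρ q.2 * aδ q.2)) ≤ R * (d * c) := by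
      have he : (∑ q ∈ Q, (aρ q.1 * aδ q.1) * (aρ q.2 * aδ q.2))
          = (∑ p ∈ S ×ˢ S, aρ p * aδ p) ^ 2 := by
        rw [hQ_def, Finset.sum_product, sq, Finset.sum_mul_sum]
      rw [he]
      refine le_trans (Finset.sum_mul_sq_le_sq_mul_sq (S ×ˢ S) aρ aδ) ?_
      exact mul_le_mul hρ2 hδ2 (Finset.sum_nonneg fun p _ => sq_nonneg _) (le_of_lt hR0)
    have hBand : (∑ q ∈ Q, if |Δf q| < ΔE then (aρ q.1 * aδ q.1) * (aρ q.2 * aδ q.2) else 0)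
        < R * (d * ε) := by
      have hBnn : 0 ≤ ∑ q ∈ Q, if |Δf q| < ΔE then (aρ q.1 * aδ q.1) * (aρ q.2 * aδ q.2)
          else 0 := by
        refine Finset.sum_nonneg fun q _ => ?_
        by_cases hq : |Δf q| < ΔE
        · rw [if_pos hq]
          exact mul_nonneg (mul_nonneg (haρnn _) (haδnn _)) (mul_nonneg (haρnn _) (haδnn _))
        · rw [if_neg hq]
      have hre : (∑ q ∈ Q, if |Δf q| < ΔE then (aρ q.1 * aδ q.1) * (aρ q.2 * aδ q.2) else 0)
          = ∑ q ∈ Q, (aρ q.1 * aρ q.2) * (if |Δf q| < ΔE then aδ q.1 * aδ q.2 else 0) := by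
        refine Finset.sum_congr rfl fun q _ => ?_
        by_cases hq : |Δf q| < ΔE
        · rw [if_pos hq, if_pos hq]; ring
        · rw [if_neg hq, if_neg hq, mul_zero]
      have hcs := Finset.sum_mul_sq_le_sq_mul_sq Q (fun q => aρ q.1 * aρ q.2)
        (fun q => if |Δf q| < ΔE then aδ q.1 * aδ q.2 else 0)
      have hF1 : ∑ q ∈ Q, (aρ q.1 * aρ q.2) ^ 2 ≤ R ^ 2 := by
        have he : ∑ q ∈ Q, (aρ q.1 * aρ q.2) ^ 2 = (∑ p ∈ S ×ˢ S, aρ p ^ 2) ^ 2 := by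
          simp_rw [mul_pow]
          rw [hQ_def, Finset.sum_product, sq, Finset.sum_mul_sum]
        rw [he]
        exact pow_le_pow_left₀ (Finset.sum_nonneg fun p _ => sq_nonneg _) hρ2 2
      have hF2nn : 0 ≤ ∑ q ∈ Q, (if |Δf q| < ΔE then aδ q.1 * aδ q.2 else 0) ^ 2 :=
        Finset.sum_nonneg fun q _ => sq_nonneg _
      have hF2 : ∑ q ∈ Q, (if |Δf q| < ΔE then aδ q.1 * aδ q.2 else 0) ^ 2 < d ^ 2 * ε ^ 2 := by
        have heq : ∑ q ∈ Q, (if |Δf q| < ΔE then aδ q.1 * aδ q.2 else 0) ^ 2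
            = ∑ n ∈ S, ∑ m ∈ S, ∑ k ∈ S, ∑ l ∈ S,
              if |E n + E l - E m - E k| < ΔE then
                ‖devEl S PiA n m‖ ^ 2 * ‖devEl S PiA l k‖ ^ 2
              else 0 := by
          rw [hQ_def]
          simp only [Finset.sum_product, hΔf_def, haδ_def]
          refine Finset.sum_congr rfl fun n _ => Finset.sum_congr rfl fun m _ =>
            Finset.sum_congr rfl fun k _ => Finset.sum_congr rfl fun l _ => ?_
          by_cases hq : |E n + E l - E m - E k| < ΔE
          · rw [if_pos hq, if_pos hq, mul_pow, devEl_abs_symm hPH]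
          · rw [if_neg hq, if_neg hq]
            norm_num
        have hC : (1 / d ^ 2) * (∑ n ∈ S, ∑ m ∈ S, ∑ k ∈ S, ∑ l ∈ S,
            if |E n + E l - E m - E k| < ΔE then
              ‖devEl S PiA n m‖ ^ 2 * ‖devEl S PiA l k‖ ^ 2
            else 0) < ε ^ 2 := hCEBT
        rw [heq]
        have hd2 : (0:ℝ) < d ^ 2 := pow_pos hd0 2
        calc (∑ n ∈ S, ∑ m ∈ S, ∑ k ∈ S, ∑ l ∈ S,
              if |E n + E l - E m - E k| < ΔE then
                ‖devEl S PiA n m‖ ^ 2 * ‖devEl S PiA l k‖ ^ 2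
              else 0)
            = d ^ 2 * ((1 / d ^ 2) * (∑ n ∈ S, ∑ m ∈ S, ∑ k ∈ S, ∑ l ∈ S,
              if |E n + E l - E m - E k| < ΔE then
                ‖devEl S PiA n m‖ ^ 2 * ‖devEl S PiA l k‖ ^ 2
              else 0)) := by field_simp
          _ < d ^ 2 * ε ^ 2 := mul_lt_mul_of_pos_left hC hd2
      have h9 : (∑ q ∈ Q, if |Δf q| < ΔE then (aρ q.1 * aδ q.1) * (aρ q.2 * aδ q.2) else 0) ^ 2
          < (R * (d * ε)) ^ 2 := by
        calc (∑ q ∈ Q, if |Δf q| < ΔE then (aρ q.1 * aδ q.1) * (aρ q.2 * aδ q.2) else 0) ^ 2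
            = (∑ q ∈ Q, (aρ q.1 * aρ q.2) * (if |Δf q| < ΔE then aδ q.1 * aδ q.2 else 0)) ^ 2 :=
              by rw [hre]
          _ ≤ (∑ q ∈ Q, (aρ q.1 * aρ q.2) ^ 2) *
                (∑ q ∈ Q, (if |Δf q| < ΔE then aδ q.1 * aδ q.2 else 0) ^ 2) := hcs
          _ ≤ R ^ 2 * (∑ q ∈ Q, (if |Δf q| < ΔE then aδ q.1 * aδ q.2 else 0) ^ 2) :=
              mul_le_mul_of_nonneg_right hF1 hF2nn
          _ < R ^ 2 * (d ^ 2 * ε ^ 2) := by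
              refine mul_lt_mul_of_pos_left hF2 ?_
              exact pow_pos hR0 2
          _ = (R * (d * ε)) ^ 2 := by ring
      exact lt_of_pow_lt_pow_left₀ 2 (le_of_lt (mul_pos hR0 (mul_pos hd0 hε))) h9
    calc (∫ t, w t * f t)
        ≤ (∑ q ∈ Q, if |Δf q| < ΔE then (aρ q.1 * aδ q.1) * (aρ q.2 * aδ q.2) else 0)
          + w₀ * (∑ q ∈ Q, (aρ q.1 * aδ q.1) * (aρ q.2 * aδ q.2)) := h6
      _ ≤ (∑ q ∈ Q, if |Δf q| < ΔE then (aρ q.1 * aδ q.1) * (aρ q.2 * aδ q.2) else 0)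
          + w₀ * (R * (d * c)) := by
            exact add_le_add_right (mul_le_mul_of_nonneg_left hAll hw₀) _
      _ < R * (d * ε) + w₀ * (R * (d * c)) := add_lt_add_left hBand _
      _ = B := by rw [hB_def]; ring
  -- Markov inequality
  set Xs : Set ℝ := {t : ℝ | B / κ ≤ f t} with hXs_def
  have hXmeas : MeasurableSet Xs := measurableSet_le measurable_const hfm
  refine ⟨Xs, hXmeas, ?_, ?_⟩
  · have hκB : 0 < κ / B := div_pos hκ0 hB0
    have hpt : ∀ t ∈ Xs, w t ≤ κ / B * (w t * f t) := by
      intro t ht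
      have hft : B / κ ≤ f t := ht
      have h1 : 1 ≤ κ / B * f t := by
        rw [div_mul_eq_mul_div, le_div_iff₀ hB0, one_mul]
        rw [div_le_iff₀ hκ0] at hft
        linarith
      calc w t = w t * 1 := (mul_one _).symm
        _ ≤ w t * (κ / B * f t) := mul_le_mul_of_nonneg_left h1 (hw.nonneg t)
        _ = κ / B * (w t * f t) := by ring
    have hnnae : 0 ≤ᵐ[volume] fun t => w t * f t :=
      Filter.Eventually.of_forall fun t =>
        mul_nonneg (hw.nonneg t) (Complex.normSq_nonneg (g t))
    calc (∫ t in Xs, w t)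
        ≤ ∫ t in Xs, κ / B * (w t * f t) :=
          setIntegral_mono_on hw.integrable.integrableOn
            ((hint.const_mul (κ / B)).integrableOn) hXmeas hpt
      _ = κ / B * ∫ t in Xs, w t * f t := integral_const_mul _ _
      _ ≤ κ / B * ∫ t, w t * f t :=
          mul_le_mul_of_nonneg_left (setIntegral_le_integral hint hnnae) (le_of_lt hκB)
      _ < κ / B * B := mul_lt_mul_of_pos_left hIbound hκB
      _ = κ := by field_simp
  · intro t ht
    have hft : f t < B / κ := lt_of_not_ge ht
    calc ((evolve E t ρ * PiA).trace.re - c) ^ 2 ≤ f t := hgA t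
      _ < B / κ := hft
      _ = (ε + w₀ * c) * (d * R) / κ := by rw [hB_def]

end QET
end

section
/- Let A and Q₁, …, Q_M (M ≥ 1) be Hermitian operators on ℂ^D with Tr(Q_k Q_j) = 0 for all k ≠ j and Tr(Q_k²) > 0 for each k. Let ΔE > 0, W ∈ (0,1), and w₂₀ ∈ (0,1). Let w₊ and w₂₊ be completely positive weights with w̃₊(δE) ≥ W for all |δE| < ΔE and w̃₂₊(δE) ≤ w₂₀ for all |δE| ≥ ΔE. For each k set δQ_k² := |Tr(Q_k²) − ∫_ℝ w₂₊(t) · Tr(Q_k(t) Q_k) dt|, where X(t) := exp(−itH) · X · exp(itH). Then ∫_ℝ w₊(t) · Tr(A(t) A) dt ≥ W · Σ_{k=1}^{M} (max(|Tr(A Q_k)| − √(δQ_k² · Tr(A²) / (1 − w₂₀)), 0))² / Tr(Q_k²). -/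
open MeasureTheory Filter
open scoped ComplexOrder

namespace QET

variable {D : ℕ}

/-! Auxiliary lemmas -/

lemma evolve_apply (E : Fin D → ℝ) (t : ℝ) (X : Matrix (Fin D) (Fin D) ℂ) (n m : Fin D) :
    evolve E t X n m
      = Complex.exp ((-((E n - E m) * t) : ℝ) * Complex.I) * X n m := by
  simp only [evolve, U, Matrix.mul_diagonal, Matrix.diagonal_mul]
  rw [mul_right_comm, ← Complex.exp_add]
  congr 1
  push_cast
  ring

lemma trace_evolve_re (E : Fin D → ℝ) (t : ℝ) (X : Matrix (Fin D) (Fin D) ℂ)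
    (hX : X.IsHermitian) :
    (evolve E t X * X).trace.re
      = ∑ n, ∑ m, Real.cos ((E n - E m) * t) * ‖X n m‖ ^ 2 := by
  have h1 : (evolve E t X * X).trace
      = ∑ n, ∑ m, Complex.exp ((-((E n - E m) * t) : ℝ) * Complex.I)
          * ((‖X n m‖ ^ 2 : ℝ) : ℂ) := by
    rw [Matrix.trace]
    simp only [Matrix.diag, Matrix.mul_apply]
    refine Finset.sum_congr rfl fun n _ => Finset.sum_congr rfl fun m _ => ?_
    rw [evolve_apply]
    have hmn : X m n = (starRingEnd ℂ) (X n m) := (hX.apply m n).symm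
    rw [hmn, mul_assoc, Complex.mul_conj, ← Complex.sq_norm]
  rw [h1, Complex.re_sum]
  refine Finset.sum_congr rfl fun n _ => ?_
  rw [Complex.re_sum]
  refine Finset.sum_congr rfl fun m _ => ?_
  rw [Complex.mul_re, Complex.exp_ofReal_mul_I_re, Complex.exp_ofReal_mul_I_im]
  simp [← Complex.ofReal_pow, Real.cos_neg]

lemma integrable_mul_cos {w : ℝ → ℝ} (hw : IsWeight w) (δ : ℝ) :
    Integrable (fun t => w t * Real.cos (δ * t)) := by
  have h := hw.integrable.bdd_mul
    ((Real.continuous_cos.comp (continuous_const.mul continuous_id)).aestronglyMeasurable)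
    (c := 1) (ae_of_all _ fun t => by simpa using Real.abs_cos_le_one (δ * t))
  simpa [mul_comm] using h

lemma integrable_complex_kernel {w : ℝ → ℝ} (hw : IsWeight w) (δ : ℝ) :
    Integrable (fun t => (w t : ℂ) * Complex.exp (-(Complex.I) * δ * t)) := by
  have hc : Continuous fun t : ℝ => Complex.exp (-(Complex.I) * δ * t) := by
    exact Complex.continuous_exp.comp (by fun_prop)
  have h : Integrable (fun t : ℝ => Complex.exp (-(Complex.I) * δ * t) * (w t : ℂ)) :=
    (hw.integrable.ofReal (𝕜 := ℂ)).bdd_mul hc.aestronglyMeasurable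
    (c := 1) (ae_of_all _ fun t => by
      rw [Complex.norm_exp]
      have h0 : (-(Complex.I) * δ * t).re = 0 := by simp
      simp [h0])
  have hfun : (fun t => (w t : ℂ) * Complex.exp (-(Complex.I) * δ * t))
      = fun t : ℝ => Complex.exp (-(Complex.I) * δ * t) * (w t : ℂ) := by
    funext t; ring
  rw [hfun]; exact h

lemma fourier_re {w : ℝ → ℝ} (hw : IsWeight w) (δ : ℝ) :
    (fourier w δ).re = ∫ t : ℝ, w t * Real.cos (δ * t) := by
  have hi := integrable_complex_kernel hw δ
  have := integral_re hi
  rw [fourier]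
  rw [RCLike.re_to_complex] at this
  rw [← this]
  congr 1
  ext t
  have e1 : (-(Complex.I) * δ * t) = ((-(δ * t) : ℝ) : ℂ) * Complex.I := by push_cast; ring
  rw [RCLike.re_to_complex, Complex.mul_re, e1, Complex.exp_ofReal_mul_I_re,
    Complex.exp_ofReal_mul_I_im]
  simp [Real.cos_neg]

lemma weighted_autocorr {w : ℝ → ℝ} (hw : IsWeight w) (E : Fin D → ℝ)
    (X : Matrix (Fin D) (Fin D) ℂ) (hX : X.IsHermitian) :
    (∫ t : ℝ, w t * (evolve E t X * X).trace.re)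
      = ∑ p : Fin D × Fin D,
          (fourier w (E p.1 - E p.2)).re * ‖X p.1 p.2‖ ^ 2 := by
  have hpt : ∀ t : ℝ, w t * (evolve E t X * X).trace.re
      = ∑ p : Fin D × Fin D,
          w t * Real.cos ((E p.1 - E p.2) * t) * ‖X p.1 p.2‖ ^ 2 := by
    intro t
    simp only [Fintype.sum_prod_type]
    rw [trace_evolve_re E t X hX, Finset.mul_sum]
    refine Finset.sum_congr rfl fun n _ => ?_
    rw [Finset.mul_sum]
    exact Finset.sum_congr rfl fun m _ => by ring
  calc (∫ t : ℝ, w t * (evolve E t X * X).trace.re)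
      = ∫ t : ℝ, ∑ p : Fin D × Fin D,
          w t * Real.cos ((E p.1 - E p.2) * t) * ‖X p.1 p.2‖ ^ 2 := by
        simp_rw [hpt]
    _ = ∑ p : Fin D × Fin D, ∫ t : ℝ,
          w t * Real.cos ((E p.1 - E p.2) * t) * ‖X p.1 p.2‖ ^ 2 :=
        integral_finset_sum _ fun p _ => (integrable_mul_cos hw _).mul_const _
    _ = _ := by
        refine Finset.sum_congr rfl fun p _ => ?_
        rw [integral_mul_const, fourier_re hw]

lemma fourier_re_le_one {w : ℝ → ℝ} (hw : IsWeight w) (δ : ℝ) :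
    (fourier w δ).re ≤ 1 := by
  have h1 := Complex.abs_re_le_norm (fourier w δ)
  have h2 : ‖fourier w δ‖
      ≤ ∫ t : ℝ, ‖(w t : ℂ) * Complex.exp (-(Complex.I) * δ * t)‖ := by
    rw [fourier]
    exact norm_integral_le_integral_norm _
  have h3 : (∫ t : ℝ, ‖(w t : ℂ) * Complex.exp (-(Complex.I) * δ * t)‖) = ∫ t : ℝ, w t := by
    congr 1
    funext t
    rw [norm_mul, Complex.norm_real, Real.norm_eq_abs,
      Complex.norm_exp]
    have h0 : (-(Complex.I) * δ * t).re = 0 := by simp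
    rw [h0, Real.exp_zero, mul_one, abs_of_nonneg (hw.nonneg t)]
  calc (fourier w δ).re ≤ |(fourier w δ).re| := le_abs_self _
    _ ≤ ‖fourier w δ‖ := h1
    _ ≤ ∫ t : ℝ, w t := h2.trans (le_of_eq h3)
    _ = 1 := hw.normalized

/-! Euclidean-space machinery -/

noncomputable def vecOf (Q : Matrix (Fin D) (Fin D) ℂ) : EuclideanSpace ℂ (Fin D × Fin D) :=
  (WithLp.equiv 2 _).symm fun p => Q p.1 p.2

lemma vecOf_apply (Q : Matrix (Fin D) (Fin D) ℂ) (p : Fin D × Fin D) :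
    vecOf Q p = Q p.1 p.2 := rfl

lemma inner_vecOf (Q R : Matrix (Fin D) (Fin D) ℂ) (hQ : Q.IsHermitian) :
    (inner ℂ (vecOf Q) (vecOf R) : ℂ) = (Q * R).trace := by
  rw [PiLp.inner_apply]
  simp only [RCLike.inner_apply', vecOf_apply]
  rw [Matrix.trace]
  simp only [Matrix.diag, Matrix.mul_apply, Fintype.sum_prod_type]
  rw [Finset.sum_comm]
  refine Finset.sum_congr rfl fun n _ => Finset.sum_congr rfl fun m _ => ?_
  rw [← hQ.apply n m]
  rfl

lemma norm_sq_vecOf (Q : Matrix (Fin D) (Fin D) ℂ) (hQ : Q.IsHermitian) :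
    ‖vecOf Q‖ ^ 2 = (Q * Q).trace.re := by
  have h := inner_vecOf Q Q hQ
  rw [inner_self_eq_norm_sq_to_K] at h
  rw [← h]
  norm_cast

lemma norm_sq_euclid (y : EuclideanSpace ℂ (Fin D × Fin D)) :
    ‖y‖ ^ 2 = ∑ p : Fin D × Fin D, ‖y p‖ ^ 2 := by
  rw [EuclideanSpace.norm_eq, Real.sq_sqrt (by positivity)]

lemma trace_sq_re (E : Fin D → ℝ) (X : Matrix (Fin D) (Fin D) ℂ) (hX : X.IsHermitian) :
    (X * X).trace.re = ∑ p : Fin D × Fin D, ‖X p.1 p.2‖ ^ 2 := by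
  have h0 : evolve E 0 X = X := by
    simp [evolve, U, Matrix.diagonal_one]
  have h := trace_evolve_re E 0 X hX
  rw [h0] at h
  simp only [mul_zero, Real.cos_zero, one_mul] at h
  rw [h]
  exact (Fintype.sum_prod_type' (fun x y => ‖X x y‖ ^ 2)).symm

lemma bessel {M : ℕ} (Q : Fin M → Matrix (Fin D) (Fin D) ℂ)
    (hQherm : ∀ k, (Q k).IsHermitian)
    (horth : ∀ k j, k ≠ j → (Q k * Q j).trace = 0)
    (hQpos : ∀ k, 0 < (Q k * Q k).trace.re)
    (x : EuclideanSpace ℂ (Fin D × Fin D)) :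
    ∑ k : Fin M, ‖(inner ℂ (vecOf (Q k)) x : ℂ)‖ ^ 2 / (Q k * Q k).trace.re
      ≤ ‖x‖ ^ 2 := by
  set v : Fin M → EuclideanSpace ℂ (Fin D × Fin D) := fun k => vecOf (Q k) with hv
  have hnormpos : ∀ k, 0 < ‖v k‖ := by
    intro k
    have := hQpos k
    rw [← norm_sq_vecOf (Q k) (hQherm k)] at this
    nlinarith [norm_nonneg (v k)]
  set u : Fin M → EuclideanSpace ℂ (Fin D × Fin D) :=
    fun k => ((‖v k‖ : ℂ))⁻¹ • v k with hu
  have hON : Orthonormal ℂ u := by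
    rw [orthonormal_iff_ite]
    intro k j
    rw [hu]
    simp only [inner_smul_left, inner_smul_right, map_inv₀, Complex.conj_ofReal]
    by_cases hkj : k = j
    · subst hkj
      rw [inner_self_eq_norm_sq_to_K]
      simp only [if_pos rfl]
      have hne := (hnormpos k).ne'
      field_simp
      simp
    · rw [if_neg hkj, inner_vecOf _ _ (hQherm k), horth k j hkj]
      simp
  have hB := hON.sum_inner_products_le (s := Finset.univ) x
  refine le_trans (le_of_eq ?_) hB
  refine Finset.sum_congr rfl fun k _ => ?_
  rw [hu]
  simp only [inner_smul_left, map_inv₀, Complex.conj_ofReal, norm_mul, mul_pow, norm_inv,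
    Complex.norm_real, Real.norm_eq_abs, abs_of_pos (hnormpos k)]
  rw [← norm_sq_vecOf (Q k) (hQherm k)]
  have hne : (‖v k‖ : ℝ) ≠ 0 := (hnormpos k).ne'
  show ‖inner ℂ (v k) x‖ ^ 2 / ‖vecOf (Q k)‖ ^ 2
      = ‖v k‖⁻¹ ^ 2 * ‖inner ℂ (v k) x‖ ^ 2
  rw [show vecOf (Q k) = v k from rfl]
  field_simp

/-- **Finite-time Mazur–Suzuki inequality with approximately conserved charges.**
Let `A` and `Q₁, …, Q_M` (`M ≥ 1`) be Hermitian operators on `ℂ^D` with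
`Tr(Q_k Q_j) = 0` for `k ≠ j` and `Tr(Q_k²) > 0`.  Let `ΔE > 0`, `W ∈ (0,1)`,
`w₂₀ ∈ (0,1)`, and let `w₊`, `w₂₊` be completely positive weights with
`w̃₊(δE) ≥ W` for `|δE| < ΔE` and `w̃₂₊(δE) ≤ w₂₀` for `|δE| ≥ ΔE`.  With
`δQ_k² = |Tr(Q_k²) - ∫ w₂₊(t) Tr(Q_k(t) Q_k) dt|`, the completely positive time average of
the autocorrelator of `A` is bounded below:
`∫ w₊(t) Tr(A(t) A) dt ≥ W Σ_k (max(|Tr(A Q_k)| - √(δQ_k² Tr(A²)/(1-w₂₀)), 0))² / Tr(Q_k²)`. -/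
theorem finite_time_mazur_suzuki
    {D M : ℕ} (hD : 0 < D) (hM : 1 ≤ M) (E : Fin D → ℝ)
    (A : Matrix (Fin D) (Fin D) ℂ) (hA : A.IsHermitian)
    (Q : Fin M → Matrix (Fin D) (Fin D) ℂ) (hQherm : ∀ k, (Q k).IsHermitian)
    (horth : ∀ k j, k ≠ j → (Q k * Q j).trace = 0)
    (hQpos : ∀ k, 0 < (Q k * Q k).trace.re)
    (ΔE W w₂₀ : ℝ) (hΔE : 0 < ΔE) (hW0 : 0 < W) (hW1 : W < 1)
    (hw₂₀0 : 0 < w₂₀) (hw₂₀1 : w₂₀ < 1)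
    (w₁ w₂ : ℝ → ℝ) (hw₁ : IsCPWeight w₁) (hw₂ : IsCPWeight w₂)
    (hw₁band : ∀ δE : ℝ, |δE| < ΔE → W ≤ (fourier w₁ δE).re)
    (hw₂band : ∀ δE : ℝ, ΔE ≤ |δE| → (fourier w₂ δE).re ≤ w₂₀) :
    (∫ t : ℝ, w₁ t * (evolve E t A * A).trace.re)
      ≥ W * ∑ k : Fin M,
          (max (|(A * Q k).trace.re| -
              Real.sqrt
                (|(Q k * Q k).trace.re -
                    ∫ t : ℝ, w₂ t * (evolve E t (Q k) * Q k).trace.re| *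
                  (A * A).trace.re / (1 - w₂₀))) 0) ^ 2
            / (Q k * Q k).trace.re := by
  classical
  -- band / off-band vectors
  let xb : EuclideanSpace ℂ (Fin D × Fin D) := WithLp.toLp 2 <|
    fun p : Fin D × Fin D => if |E p.1 - E p.2| < ΔE then A p.1 p.2 else 0
  let xo : EuclideanSpace ℂ (Fin D × Fin D) := WithLp.toLp 2 <|
    fun p : Fin D × Fin D => if |E p.1 - E p.2| < ΔE then 0 else A p.1 p.2
  let vo : Fin M → EuclideanSpace ℂ (Fin D × Fin D) := fun k => WithLp.toLp 2 <|
    fun p : Fin D × Fin D => if |E p.1 - E p.2| < ΔE then 0 else Q k p.1 p.2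
  have hxb_apply : ∀ p : Fin D × Fin D,
      xb p = if |E p.1 - E p.2| < ΔE then A p.1 p.2 else 0 := fun _ => rfl
  have hxo_apply : ∀ p : Fin D × Fin D,
      xo p = if |E p.1 - E p.2| < ΔE then 0 else A p.1 p.2 := fun _ => rfl
  have hvo_apply : ∀ k (p : Fin D × Fin D),
      vo k p = if |E p.1 - E p.2| < ΔE then 0 else Q k p.1 p.2 := fun _ _ => rfl
  -- the weighted autocorrelator of A
  have hLHS := weighted_autocorr hw₁.toIsWeight E A hA
  -- Step 1 : LHS ≥ W ‖xb‖²
  have hxb2 : ‖xb‖ ^ 2 = ∑ p : Fin D × Fin D,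
      if |E p.1 - E p.2| < ΔE then ‖A p.1 p.2‖ ^ 2 else 0 := by
    rw [norm_sq_euclid]
    refine Finset.sum_congr rfl fun p _ => ?_
    rw [hxb_apply p]
    by_cases h : |E p.1 - E p.2| < ΔE <;> simp [h]
  have hstep1 : W * ‖xb‖ ^ 2
      ≤ ∑ p : Fin D × Fin D,
          (fourier w₁ (E p.1 - E p.2)).re * ‖A p.1 p.2‖ ^ 2 := by
    rw [hxb2, Finset.mul_sum]
    refine Finset.sum_le_sum fun p _ => ?_
    by_cases h : |E p.1 - E p.2| < ΔE
    · rw [if_pos h]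
      exact mul_le_mul_of_nonneg_right (hw₁band _ h) (by positivity)
    · rw [if_neg h, mul_zero]
      exact mul_nonneg (hw₁.fourier_nonneg _) (by positivity)
  -- Step 2 : off-band weight of each charge is controlled by δQ²
  have hQoff : ∀ k, (1 - w₂₀) * ‖vo k‖ ^ 2 ≤
      |(Q k * Q k).trace.re - ∫ t : ℝ, w₂ t * (evolve E t (Q k) * Q k).trace.re| := by
    intro k
    have hNk := trace_sq_re E (Q k) (hQherm k)
    have hIk := weighted_autocorr hw₂.toIsWeight E (Q k) (hQherm k)
    have hdiff : (Q k * Q k).trace.re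
        - (∫ t : ℝ, w₂ t * (evolve E t (Q k) * Q k).trace.re)
        = ∑ p : Fin D × Fin D,
            (1 - (fourier w₂ (E p.1 - E p.2)).re) * ‖Q k p.1 p.2‖ ^ 2 := by
      rw [hNk, hIk, ← Finset.sum_sub_distrib]
      exact Finset.sum_congr rfl fun p _ => by ring
    have hterm_nonneg : ∀ p ∈ (Finset.univ : Finset (Fin D × Fin D)),
        (0:ℝ) ≤ (1 - (fourier w₂ (E p.1 - E p.2)).re) * ‖Q k p.1 p.2‖ ^ 2 := by
      intro p _
      have := fourier_re_le_one hw₂.toIsWeight (E p.1 - E p.2)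
      have h2 : (0:ℝ) ≤ ‖Q k p.1 p.2‖ ^ 2 := by positivity
      exact mul_nonneg (by linarith) h2
    have habs : |(Q k * Q k).trace.re
        - ∫ t : ℝ, w₂ t * (evolve E t (Q k) * Q k).trace.re|
        = ∑ p : Fin D × Fin D,
            (1 - (fourier w₂ (E p.1 - E p.2)).re) * ‖Q k p.1 p.2‖ ^ 2 := by
      rw [hdiff]
      exact abs_of_nonneg (Finset.sum_nonneg hterm_nonneg)
    rw [habs, norm_sq_euclid, Finset.mul_sum]
    refine Finset.sum_le_sum fun p _ => ?_
    rw [hvo_apply k p]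
    by_cases h : |E p.1 - E p.2| < ΔE
    · rw [if_pos h]
      simpa using hterm_nonneg p (Finset.mem_univ p)
    · rw [if_neg h]
      have hf2 := hw₂band _ (not_lt.1 h)
      have h2 : (0:ℝ) ≤ ‖Q k p.1 p.2‖ ^ 2 := by positivity
      exact mul_le_mul_of_nonneg_right (by linarith) h2
  -- Step 3 : trace decomposition
  have hsplit : vecOf A = xb + xo := by
    ext p
    show A p.1 p.2 = (xb + xo) p
    rw [PiLp.add_apply, hxb_apply, hxo_apply]
    by_cases h : |E p.1 - E p.2| < ΔE <;> simp [h]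
  have htrsplit : ∀ k, (A * Q k).trace
      = (inner ℂ (vecOf (Q k)) xb : ℂ) + inner ℂ (vo k) xo := by
    intro k
    have h1 : (A * Q k).trace = (inner ℂ (vecOf (Q k)) (vecOf A) : ℂ) := by
      rw [inner_vecOf (Q k) A (hQherm k), Matrix.trace_mul_comm]
    have h2 : (inner ℂ (vecOf (Q k)) xo : ℂ) = inner ℂ (vo k) xo := by
      rw [PiLp.inner_apply, PiLp.inner_apply]
      refine Finset.sum_congr rfl fun p _ => ?_
      simp only [RCLike.inner_apply, vecOf_apply, hxo_apply, hvo_apply]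
      by_cases h : |E p.1 - E p.2| < ΔE <;> simp [h]
    rw [h1, hsplit, inner_add_right, h2]
  -- Step 4 : the off-band inner product is small
  have hTA := trace_sq_re E A hA
  have hxo2 : ‖xo‖ ^ 2 ≤ (A * A).trace.re := by
    rw [norm_sq_euclid, hTA]
    refine Finset.sum_le_sum fun p _ => ?_
    rw [hxo_apply p]
    by_cases h : |E p.1 - E p.2| < ΔE <;> simp [h] <;> positivity
  have hγ : ∀ k, ‖(inner ℂ (vo k) xo : ℂ)‖ ≤
      Real.sqrt (|(Q k * Q k).trace.re -
          ∫ t : ℝ, w₂ t * (evolve E t (Q k) * Q k).trace.re| *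
        (A * A).trace.re / (1 - w₂₀)) := by
    intro k
    refine le_trans (norm_inner_le_norm _ _) (Real.le_sqrt_of_sq_le ?_)
    have h1w : (0:ℝ) < 1 - w₂₀ := by linarith
    have h1 : ‖vo k‖ ^ 2 ≤ |(Q k * Q k).trace.re -
        ∫ t : ℝ, w₂ t * (evolve E t (Q k) * Q k).trace.re| / (1 - w₂₀) := by
      rw [le_div_iff₀ h1w, mul_comm]
      exact hQoff k
    have hTAnn : (0:ℝ) ≤ (A * A).trace.re := by
      rw [hTA]; positivity
    calc (‖vo k‖ * ‖xo‖) ^ 2 = ‖vo k‖ ^ 2 * ‖xo‖ ^ 2 := by ring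
      _ ≤ (|(Q k * Q k).trace.re -
            ∫ t : ℝ, w₂ t * (evolve E t (Q k) * Q k).trace.re| / (1 - w₂₀))
          * (A * A).trace.re := by
          exact mul_le_mul h1 hxo2 (sq_nonneg _)
            (div_nonneg (abs_nonneg _) h1w.le)
      _ = |(Q k * Q k).trace.re -
            ∫ t : ℝ, w₂ t * (evolve E t (Q k) * Q k).trace.re|
          * (A * A).trace.re / (1 - w₂₀) := by ring
  -- Step 5 : per-charge bound  max(...) ≤ ‖⟪v k, xb⟫‖
  have hm : ∀ k, max (|(A * Q k).trace.re| -
      Real.sqrt (|(Q k * Q k).trace.re -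
          ∫ t : ℝ, w₂ t * (evolve E t (Q k) * Q k).trace.re| *
        (A * A).trace.re / (1 - w₂₀))) 0 ≤ ‖(inner ℂ (vecOf (Q k)) xb : ℂ)‖ := by
    intro k
    refine max_le ?_ (norm_nonneg _)
    have h1 : |(A * Q k).trace.re| ≤ ‖(A * Q k).trace‖ :=
      Complex.abs_re_le_norm _
    have h2 : ‖(A * Q k).trace‖
        ≤ ‖(inner ℂ (vecOf (Q k)) xb : ℂ)‖ + ‖(inner ℂ (vo k) xo : ℂ)‖ := by
      rw [htrsplit k]
      exact norm_add_le _ _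
    have h3 := hγ k
    linarith
  -- Step 6 : Bessel and conclusion
  have hB := bessel Q hQherm horth hQpos xb
  have hsum : (∑ k : Fin M,
      (max (|(A * Q k).trace.re| -
          Real.sqrt (|(Q k * Q k).trace.re -
              ∫ t : ℝ, w₂ t * (evolve E t (Q k) * Q k).trace.re| *
            (A * A).trace.re / (1 - w₂₀))) 0) ^ 2 / (Q k * Q k).trace.re)
      ≤ ‖xb‖ ^ 2 := by
    refine le_trans (Finset.sum_le_sum fun k _ => ?_) hB
    have hnum := pow_le_pow_left₀ (le_max_right _ _) (hm k) 2
    exact div_le_div_of_nonneg_right hnum (hQpos k).le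
  rw [ge_iff_le, hLHS]
  calc W * ∑ k : Fin M,
      (max (|(A * Q k).trace.re| -
          Real.sqrt (|(Q k * Q k).trace.re -
              ∫ t : ℝ, w₂ t * (evolve E t (Q k) * Q k).trace.re| *
            (A * A).trace.re / (1 - w₂₀))) 0) ^ 2 / (Q k * Q k).trace.re
      ≤ W * ‖xb‖ ^ 2 := mul_le_mul_of_nonneg_left hsum hW0.le
    _ ≤ _ := hstep1


end QET
end

section
/- Assume Π_A satisfies energy-band thermalization in the shell S (of cardinality d ≥ 1) with bandwidth ΔE > 0 and accuracy ε > 0, and let λ > 0. Then the number of distinct real values E₀ ∈ {E n : n ∈ S} for which Σ_{n,m ∈ S with E n = E m = E₀} |⟨e n, Π_A (e m)⟩ − ⟨Π_A⟩_S · δ_{nm}|² ≥ λ² (i.e. the eigenspace of E₀ violates eigenspace thermalization to accuracy λ) is strictly less than (ε²/λ²) · d. -/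
open MeasureTheory Filter
open scoped ComplexOrder

namespace QET

variable {D : ℕ}

/-- **Energy-band thermalization constrains the number of non-thermal eigenspaces.**
If `Π_A` satisfies energy-band thermalization in the shell `S` (of cardinality `d ≥ 1`)
with bandwidth `ΔE > 0` and accuracy `ε > 0`, then for every `λ > 0`, the number of
distinct values `E₀ ∈ {E n : n ∈ S}` whose eigenspace violates eigenspace thermalization to
accuracy `λ`, i.e. with
`Σ_{n,m ∈ S, E n = E m = E₀} |⟨e n, Π_A e m⟩ - ⟨Π_A⟩_S δ_{nm}|² ≥ λ²`,
is strictly less than `(ε²/λ²) · d`. -/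
theorem energy_band_constrains_nonthermal_eigenspaces
    {D : ℕ} (hD : 0 < D) (E : Fin D → ℝ)
    (S : Finset (Fin D)) (hd : 1 ≤ S.card)
    (PiA : Matrix (Fin D) (Fin D) ℂ) (hPiA : IsObservable PiA)
    (ΔE ε : ℝ) (hΔE : 0 < ΔE) (hε : 0 < ε)
    (hEBT : EnergyBandTherm S E ΔE ε PiA)
    (lam : ℝ) (hlam : 0 < lam) :
    (((S.image E).filter fun E₀ : ℝ =>
        lam ^ 2 ≤ ∑ n ∈ S, ∑ m ∈ S,
          if E n = E₀ ∧ E m = E₀ then ‖devEl S PiA n m‖ ^ 2 else 0).card : ℝ)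
      < (ε ^ 2 / lam ^ 2) * S.card := by
  classical
  set f : Fin D → Fin D → ℝ := fun n m => ‖devEl S PiA n m‖ ^ 2 with hf
  have hfnn : ∀ n m, 0 ≤ f n m := fun n m => sq_nonneg _
  set T := (S.image E).filter fun E₀ : ℝ =>
        lam ^ 2 ≤ ∑ n ∈ S, ∑ m ∈ S, if E n = E₀ ∧ E m = E₀ then f n m else 0 with hT
  have hdpos : (0:ℝ) < S.card := by exact_mod_cast hd
  have key : (T.card : ℝ) * lam ^ 2 ≤ bandVar S E ΔE PiA := by
    have step1 : (T.card : ℝ) * lam ^ 2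
        ≤ ∑ E₀ ∈ T, ∑ n ∈ S, ∑ m ∈ S, if E n = E₀ ∧ E m = E₀ then f n m else 0 := by
      rw [show (T.card : ℝ) * lam ^ 2 = ∑ _E₀ ∈ T, lam ^ 2 by
        rw [Finset.sum_const, nsmul_eq_mul]]
      exact Finset.sum_le_sum fun E₀ hE₀ => (Finset.mem_filter.mp hE₀).2
    have swap : (∑ E₀ ∈ T, ∑ n ∈ S, ∑ m ∈ S, if E n = E₀ ∧ E m = E₀ then f n m else 0)
        = ∑ n ∈ S, ∑ m ∈ S, ∑ E₀ ∈ T, if E n = E₀ ∧ E m = E₀ then f n m else 0 := by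
      rw [Finset.sum_comm]
      exact Finset.sum_congr rfl fun n _ => Finset.sum_comm
    have step2 : (∑ n ∈ S, ∑ m ∈ S, ∑ E₀ ∈ T, if E n = E₀ ∧ E m = E₀ then f n m else 0)
        ≤ bandVar S E ΔE PiA := by
      unfold bandVar
      apply Finset.sum_le_sum; intro n _
      apply Finset.sum_le_sum; intro m _
      have hrw : ∀ E₀ : ℝ, (if E n = E₀ ∧ E m = E₀ then f n m else 0)
          = if E₀ = E n then (if E n = E m then f n m else 0) else 0 := by
        intro E₀
        by_cases h1 : E₀ = E n
        · subst h1
          by_cases h2 : E n = E m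
          · simp [h2]
          · have : ¬ (E n = E n ∧ E m = E n) := fun h => h2 (h.2.symm)
            rw [if_neg this, if_pos rfl, if_neg h2]
        · have : ¬ (E n = E₀ ∧ E m = E₀) := fun h => h1 h.1.symm
          rw [if_neg this, if_neg h1]
      calc (∑ E₀ ∈ T, if E n = E₀ ∧ E m = E₀ then f n m else 0)
          = ∑ E₀ ∈ T, if E₀ = E n then (if E n = E m then f n m else 0) else 0 :=
            Finset.sum_congr rfl fun E₀ _ => hrw E₀
        _ = if E n ∈ T then (if E n = E m then f n m else 0) else 0 :=
            Finset.sum_ite_eq' T (E n) _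
        _ ≤ if |E n - E m| < ΔE then f n m else 0 := by
            by_cases hmem : E n ∈ T
            · simp only [hmem, if_true]
              by_cases h2 : E n = E m
              · have : |E n - E m| < ΔE := by rw [h2]; simpa using hΔE
                rw [if_pos h2, if_pos this]
              · simp only [h2, if_false]
                split_ifs
                · exact hfnn n m
                · exact le_refl 0
            · simp only [hmem, if_false]
              split_ifs
              · exact hfnn n m
              · exact le_refl 0
    calc (T.card : ℝ) * lam ^ 2 ≤ _ := step1
      _ = _ := swap
      _ ≤ bandVar S E ΔE PiA := step2
  have hbv : bandVar S E ΔE PiA < ε ^ 2 * S.card := by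
    have := hEBT
    rw [EnergyBandTherm, one_div, inv_mul_lt_iff₀ hdpos] at this
    linarith
  have hl2 : (0:ℝ) < lam ^ 2 := pow_pos hlam 2
  rw [div_mul_eq_mul_div, lt_div_iff₀ hl2]
  calc (T.card : ℝ) * lam ^ 2 ≤ bandVar S E ΔE PiA := key
    _ < ε ^ 2 * S.card := hbv

end QET
end
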